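/- Let k ∈ ℝ³ be nonzero and let t be a trace-free real symmetric 3×3 matrix with t k = 0 (i.e. Σ_j k_j t_{ij} = 0 for each i). Then there exists a trace-free real symmetric 3×3 matrix h with σ_k(H)(h) = t. Conversely, for every trace-free symmetric h, σ_k(H)(h) is trace-free symmetric and satisfies σ_k(H)(h) k = 0. (Exactness of the symbol sequence of the conformal complex at the slot S₀² → div₂.) -/
import Mathlib


open scoped BigOperators

/-- The Levi-Civita symbol `ε_{ijk}` on three indices. -/
def eps : Fin 3 → Fin 3 → Fin 3 → ℝ := fun i j k =>
  if (i, j, k) = ((0 : Fin 3), (1 : Fin 3), (2 : Fin 3)) ∨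
     (i, j, k) = ((1 : Fin 3), (2 : Fin 3), (0 : Fin 3)) ∨
     (i, j, k) = ((2 : Fin 3), (0 : Fin 3), (1 : Fin 3)) then 1
  else if (i, j, k) = ((2 : Fin 3), (1 : Fin 3), (0 : Fin 3)) ∨
     (i, j, k) = ((1 : Fin 3), (0 : Fin 3), (2 : Fin 3)) ∨
     (i, j, k) = ((0 : Fin 3), (2 : Fin 3), (1 : Fin 3)) then -1
  else 0

/-- The Kronecker delta `δ_{ij}`. -/
def kdelta (i j : Fin 3) : ℝ := if i = j then 1 else 0

/-- The cross product on `ℝ³`: `(a × b)_i = Σ_{j,l} ε_{ijl} a_j b_l`. -/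
def cross (a b : Fin 3 → ℝ) : Fin 3 → ℝ := fun i => ∑ j, ∑ l, eps i j l * a j * b l

/-- The symbol of `rot₂`:
`(σ_k(rot₂)(h))_{ij} = Σ_{ℓ,m} ( ε_{iℓm} k_ℓ h_{mj} + ε_{jℓm} k_ℓ h_{mi} )`. -/
def sigRot2 (k : Fin 3 → ℝ) (h : Fin 3 → Fin 3 → ℝ) : Fin 3 → Fin 3 → ℝ :=
  fun i j => ∑ l, ∑ m, (eps i l m * k l * h m j + eps j l m * k l * h m i)

/-- The symbol of the linearised Cotton operator `H`:
`(σ_k(H)(h))_{ij} = 4( Σ_{n,ℓ,m} k_n k_ℓ ( k_i ε_{jℓm} + k_j ε_{iℓm} ) h_{mn}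
  − |k|² Σ_{ℓ,m} k_ℓ ( ε_{iℓm} h_{mj} + ε_{jℓm} h_{mi} ) )`. -/
def sigH (k : Fin 3 → ℝ) (h : Fin 3 → Fin 3 → ℝ) : Fin 3 → Fin 3 → ℝ :=
  fun i j => 4 * ((∑ n, ∑ l, ∑ m, k n * k l * (k i * eps j l m + k j * eps i l m) * h m n)
    - (∑ l, k l ^ 2) * (∑ l, ∑ m, k l * (eps i l m * h m j + eps j l m * h m i)))

lemma eps_000 : eps 0 0 0 = 0 := rfl
lemma eps_001 : eps 0 0 1 = 0 := rfl
lemma eps_002 : eps 0 0 2 = 0 := rfl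
lemma eps_010 : eps 0 1 0 = 0 := rfl
lemma eps_011 : eps 0 1 1 = 0 := rfl
lemma eps_012 : eps 0 1 2 = 1 := rfl
lemma eps_020 : eps 0 2 0 = 0 := rfl
lemma eps_021 : eps 0 2 1 = -1 := rfl
lemma eps_022 : eps 0 2 2 = 0 := rfl
lemma eps_100 : eps 1 0 0 = 0 := rfl
lemma eps_101 : eps 1 0 1 = 0 := rfl
lemma eps_102 : eps 1 0 2 = -1 := rfl
lemma eps_110 : eps 1 1 0 = 0 := rfl
lemma eps_111 : eps 1 1 1 = 0 := rfl
lemma eps_112 : eps 1 1 2 = 0 := rfl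
lemma eps_120 : eps 1 2 0 = 1 := rfl
lemma eps_121 : eps 1 2 1 = 0 := rfl
lemma eps_122 : eps 1 2 2 = 0 := rfl
lemma eps_200 : eps 2 0 0 = 0 := rfl
lemma eps_201 : eps 2 0 1 = 1 := rfl
lemma eps_202 : eps 2 0 2 = 0 := rfl
lemma eps_210 : eps 2 1 0 = -1 := rfl
lemma eps_211 : eps 2 1 1 = 0 := rfl
lemma eps_212 : eps 2 1 2 = 0 := rfl
lemma eps_220 : eps 2 2 0 = 0 := rfl
lemma eps_221 : eps 2 2 1 = 0 := rfl
lemma eps_222 : eps 2 2 2 = 0 := rfl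
lemma fin3_mk0 (h : 0 < 3) : (⟨0, h⟩ : Fin 3) = 0 := rfl
lemma fin3_mk1 (h : 1 < 3) : (⟨1, h⟩ : Fin 3) = 1 := rfl
lemma fin3_mk2 (h : 2 < 3) : (⟨2, h⟩ : Fin 3) = 2 := rfl

lemma sigH_factor (k : Fin 3 → ℝ) (r : Fin 3 → Fin 3 → ℝ)
    (hd0 : r 0 0 * k 0 + r 0 1 * k 1 + r 0 2 * k 2 = 0)
    (hd1 : r 1 0 * k 0 + r 1 1 * k 1 + r 1 2 * k 2 = 0)
    (hd2 : r 2 0 * k 0 + r 2 1 * k 1 + r 2 2 * k 2 = 0) (i j : Fin 3) :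
    sigH k r i j = -(4 * (k 0 ^ 2 + k 1 ^ 2 + k 2 ^ 2)) * sigRot2 k r i j := by
  fin_cases i <;> fin_cases j <;> simp only [sigH, sigRot2, Fin.sum_univ_three, fin3_mk0, fin3_mk1, fin3_mk2, eps_000, eps_001, eps_002, eps_010, eps_011, eps_012, eps_020, eps_021, eps_022, eps_100, eps_101, eps_102, eps_110, eps_111, eps_112, eps_120, eps_121, eps_122, eps_200, eps_201, eps_202, eps_210, eps_211, eps_212, eps_220, eps_221, eps_222]
  · linear_combination (-8) * k 0 * k 2 * hd1 + (8) * k 0 * k 1 * hd2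
  · linear_combination (4) * k 0 * k 2 * hd0 + (-4) * k 1 * k 2 * hd1 + (4) * k 1 ^ 2 * hd2 + (-4) * k 0 ^ 2 * hd2
  · linear_combination (-4) * k 0 * k 1 * hd0 + (-4) * k 2 ^ 2 * hd1 + (4) * k 0 ^ 2 * hd1 + (4) * k 1 * k 2 * hd2
  · linear_combination (4) * k 0 * k 2 * hd0 + (-4) * k 1 * k 2 * hd1 + (4) * k 1 ^ 2 * hd2 + (-4) * k 0 ^ 2 * hd2
  · linear_combination (8) * k 1 * k 2 * hd0 + (-8) * k 0 * k 1 * hd2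
  · linear_combination (4) * k 2 ^ 2 * hd0 + (-4) * k 1 ^ 2 * hd0 + (4) * k 0 * k 1 * hd1 + (-4) * k 0 * k 2 * hd2
  · linear_combination (-4) * k 0 * k 1 * hd0 + (-4) * k 2 ^ 2 * hd1 + (4) * k 0 ^ 2 * hd1 + (4) * k 1 * k 2 * hd2
  · linear_combination (4) * k 2 ^ 2 * hd0 + (-4) * k 1 ^ 2 * hd0 + (4) * k 0 * k 1 * hd1 + (-4) * k 0 * k 2 * hd2
  · linear_combination (-8) * k 1 * k 2 * hd0 + (8) * k 0 * k 2 * hd1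

lemma rot_rot_eq (k : Fin 3 → ℝ) (t : Fin 3 → Fin 3 → ℝ)
    (e10 : t 1 0 = t 0 1) (e20 : t 2 0 = t 0 2) (e21 : t 2 1 = t 1 2)
    (d0 : t 0 0 * k 0 + t 0 1 * k 1 + t 0 2 * k 2 = 0)
    (d1 : t 0 1 * k 0 + t 1 1 * k 1 + t 1 2 * k 2 = 0)
    (d2 : t 0 2 * k 0 + t 1 2 * k 1 + t 2 2 * k 2 = 0)
    (htr' : t 0 0 + t 1 1 + t 2 2 = 0) (i j : Fin 3) :
    sigRot2 k (sigRot2 k t) i j = -(4 * (k 0 ^ 2 + k 1 ^ 2 + k 2 ^ 2)) * t i j := by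
  fin_cases i <;> fin_cases j <;>
    simp only [sigRot2, Fin.sum_univ_three, fin3_mk0, fin3_mk1, fin3_mk2, eps_000, eps_001, eps_002, eps_010, eps_011, eps_012, eps_020, eps_021, eps_022, eps_100, eps_101, eps_102, eps_110, eps_111, eps_112, eps_120, eps_121, eps_122, eps_200, eps_201, eps_202, eps_210, eps_211, eps_212, eps_220, eps_221, eps_222, e10, e20, e21]
  · linear_combination (4) * k 0 * d0 + (-2) * k 1 * d1 + (-2) * k 2 * d2 + (2) * k 2 ^ 2 * htr' + (2) * k 1 ^ 2 * htr'
  · linear_combination (3) * k 1 * d0 + (3) * k 0 * d1 + (-2) * k 0 * k 1 * htr'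
  · linear_combination (3) * k 2 * d0 + (3) * k 0 * d2 + (-2) * k 0 * k 2 * htr'
  · linear_combination (3) * k 1 * d0 + (3) * k 0 * d1 + (-2) * k 0 * k 1 * htr'
  · linear_combination (-2) * k 0 * d0 + (4) * k 1 * d1 + (-2) * k 2 * d2 + (2) * k 2 ^ 2 * htr' + (2) * k 0 ^ 2 * htr'
  · linear_combination (3) * k 2 * d1 + (3) * k 1 * d2 + (-2) * k 1 * k 2 * htr'
  · linear_combination (3) * k 2 * d0 + (3) * k 0 * d2 + (-2) * k 0 * k 2 * htr'
  · linear_combination (3) * k 2 * d1 + (3) * k 1 * d2 + (-2) * k 1 * k 2 * htr'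
  · linear_combination (-2) * k 0 * d0 + (-2) * k 1 * d1 + (4) * k 2 * d2 + (2) * k 1 ^ 2 * htr' + (2) * k 0 ^ 2 * htr'

lemma rot_div (k : Fin 3 → ℝ) (t : Fin 3 → Fin 3 → ℝ)
    (d0 : t 0 0 * k 0 + t 0 1 * k 1 + t 0 2 * k 2 = 0)
    (d1 : t 0 1 * k 0 + t 1 1 * k 1 + t 1 2 * k 2 = 0)
    (d2 : t 0 2 * k 0 + t 1 2 * k 1 + t 2 2 * k 2 = 0)
    (e10 : t 1 0 = t 0 1) (e20 : t 2 0 = t 0 2) (e21 : t 2 1 = t 1 2) (m : Fin 3) :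
    sigRot2 k t m 0 * k 0 + sigRot2 k t m 1 * k 1 + sigRot2 k t m 2 * k 2 = 0 := by
  fin_cases m <;> simp only [sigRot2, Fin.sum_univ_three, fin3_mk0, fin3_mk1, fin3_mk2, eps_000, eps_001, eps_002, eps_010, eps_011, eps_012, eps_020, eps_021, eps_022, eps_100, eps_101, eps_102, eps_110, eps_111, eps_112, eps_120, eps_121, eps_122, eps_200, eps_201, eps_202, eps_210, eps_211, eps_212, eps_220, eps_221, eps_222, e10, e20, e21]
  · linear_combination (-1) * k 2 * d1 + k 1 * d2
  · linear_combination k 2 * d0 + (-1) * k 0 * d2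
  · linear_combination (-1) * k 1 * d0 + k 0 * d1

set_option maxHeartbeats 1000000 in
/-- exactness of the symbol sequence of the conformal complex at the slot
`S₀² → div₂`: for `k ≠ 0`, every trace-free symmetric `t` with `t k = 0` is `σ_k(H)(h)`
for some trace-free symmetric `h`; conversely every `σ_k(H)(h)` is trace-free symmetric
and satisfies `σ_k(H)(h) k = 0`. -/
theorem stmt17 (k : Fin 3 → ℝ) (hk : k ≠ 0) :
    (∀ t : Fin 3 → Fin 3 → ℝ, (∀ i j, t i j = t j i) → (∑ i, t i i) = 0 →
      (∀ i, ∑ j, t i j * k j = 0) →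
      ∃ h : Fin 3 → Fin 3 → ℝ, (∀ i j, h i j = h j i) ∧ (∑ i, h i i) = 0 ∧
        ∀ i j, sigH k h i j = t i j) ∧
    (∀ h : Fin 3 → Fin 3 → ℝ, (∀ i j, h i j = h j i) → (∑ i, h i i) = 0 →
      (∀ i j, sigH k h i j = sigH k h j i) ∧ (∑ i, sigH k h i i) = 0 ∧
        (∀ i, ∑ j, sigH k h i j * k j = 0)) := by
  have hK : (k 0 ^ 2 + k 1 ^ 2 + k 2 ^ 2) ≠ 0 := by
    intro h0
    apply hk
    have h00 : k 0 = 0 := sq_eq_zero_iff.mp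
      (by linarith [sq_nonneg (k 0), sq_nonneg (k 1), sq_nonneg (k 2)])
    have h11 : k 1 = 0 := sq_eq_zero_iff.mp
      (by linarith [sq_nonneg (k 0), sq_nonneg (k 1), sq_nonneg (k 2)])
    have h22 : k 2 = 0 := sq_eq_zero_iff.mp
      (by linarith [sq_nonneg (k 0), sq_nonneg (k 1), sq_nonneg (k 2)])
    funext i
    fin_cases i <;> simp [h00, h11, h22]
  constructor
  · intro t hsym htr htk
    have e10 : t 1 0 = t 0 1 := hsym 1 0
    have e20 : t 2 0 = t 0 2 := hsym 2 0
    have e21 : t 2 1 = t 1 2 := hsym 2 1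
    have d0 : t 0 0 * k 0 + t 0 1 * k 1 + t 0 2 * k 2 = 0 := by
      have := htk 0; simpa [Fin.sum_univ_three] using this
    have d1 : t 0 1 * k 0 + t 1 1 * k 1 + t 1 2 * k 2 = 0 := by
      have := htk 1; simp only [Fin.sum_univ_three, e10] at this; linarith
    have d2 : t 0 2 * k 0 + t 1 2 * k 1 + t 2 2 * k 2 = 0 := by
      have := htk 2; simp only [Fin.sum_univ_three, e20, e21] at this; linarith
    have htr' : t 0 0 + t 1 1 + t 2 2 = 0 := by
      simpa [Fin.sum_univ_three] using htr
    set c : ℝ := 1 / (16 * (k 0 ^ 2 + k 1 ^ 2 + k 2 ^ 2) ^ 2) with hc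
    refine ⟨fun a b => c * sigRot2 k t a b, ?_, ?_, ?_⟩
    · intro i j
      fin_cases i <;> fin_cases j <;>
        simp only [sigRot2, Fin.sum_univ_three, fin3_mk0, fin3_mk1, fin3_mk2, eps_000, eps_001, eps_002, eps_010, eps_011, eps_012, eps_020, eps_021, eps_022, eps_100, eps_101, eps_102, eps_110, eps_111, eps_112, eps_120, eps_121, eps_122, eps_200, eps_201, eps_202, eps_210, eps_211, eps_212, eps_220, eps_221, eps_222] <;> ring
    · simp only [Fin.sum_univ_three, sigRot2, fin3_mk0, fin3_mk1, fin3_mk2, eps_000, eps_001, eps_002, eps_010, eps_011, eps_012, eps_020, eps_021, eps_022, eps_100, eps_101, eps_102, eps_110, eps_111, eps_112, eps_120, eps_121, eps_122, eps_200, eps_201, eps_202, eps_210, eps_211, eps_212, eps_220, eps_221, eps_222]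
      linear_combination (2 * c * k 1) * e20 + (-2 * c * k 2) * e10 + (-2 * c * k 0) * e21
    · intro i j
      have lin : sigH k (fun a b => c * sigRot2 k t a b) i j
          = c * sigH k (fun a b => sigRot2 k t a b) i j := by
        simp only [sigH, Fin.sum_univ_three]; ring
      have hR : (fun a b => sigRot2 k t a b) = sigRot2 k t := rfl
      have key : sigH k (sigRot2 k t) i j
          = 16 * (k 0 ^ 2 + k 1 ^ 2 + k 2 ^ 2) ^ 2 * t i j := by
        rw [sigH_factor k (sigRot2 k t)
            (rot_div k t d0 d1 d2 e10 e20 e21 0)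
            (rot_div k t d0 d1 d2 e10 e20 e21 1)
            (rot_div k t d0 d1 d2 e10 e20 e21 2) i j,
          rot_rot_eq k t e10 e20 e21 d0 d1 d2 htr' i j]
        ring
      rw [lin, hR, key, hc]
      field_simp
  · intro h hsym htr
    have e10 : h 1 0 = h 0 1 := hsym 1 0
    have e20 : h 2 0 = h 0 2 := hsym 2 0
    have e21 : h 2 1 = h 1 2 := hsym 2 1
    refine ⟨?_, ?_, ?_⟩
    · intro i j
      fin_cases i <;> fin_cases j <;>
        simp only [sigH, Fin.sum_univ_three, fin3_mk0, fin3_mk1, fin3_mk2, eps_000, eps_001, eps_002, eps_010, eps_011, eps_012, eps_020, eps_021, eps_022, eps_100, eps_101, eps_102, eps_110, eps_111, eps_112, eps_120, eps_121, eps_122, eps_200, eps_201, eps_202, eps_210, eps_211, eps_212, eps_220, eps_221, eps_222] <;> ring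
    · simp only [Fin.sum_univ_three, sigH, fin3_mk0, fin3_mk1, fin3_mk2, eps_000, eps_001, eps_002, eps_010, eps_011, eps_012, eps_020, eps_021, eps_022, eps_100, eps_101, eps_102, eps_110, eps_111, eps_112, eps_120, eps_121, eps_122, eps_200, eps_201, eps_202, eps_210, eps_211, eps_212, eps_220, eps_221, eps_222, e10, e20, e21]
      ring
    · intro i
      fin_cases i <;>
        · simp only [Fin.sum_univ_three, sigH, fin3_mk0, fin3_mk1, fin3_mk2, eps_000, eps_001, eps_002, eps_010, eps_011, eps_012, eps_020, eps_021, eps_022, eps_100, eps_101, eps_102, eps_110, eps_111, eps_112, eps_120, eps_121, eps_122, eps_200, eps_201, eps_202, eps_210, eps_211, eps_212, eps_220, eps_221, eps_222, e10, e20, e21]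
          ring
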